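/- Let 0 < ε < 1 and ρ_ε = (ε-1)/(ε+1). For m ∈ ℕ, the function μ(s) = 2cos(ms)/(1+ρ_ε^m) solves the integral equation (1/2)μ(s) - ∫_{0}^{2π} K^L(s,t;ε) μ(t) dt = cos(ms) for all s, where K^L(s,t;ε) = -(1/(2π)) ε/(1+ε²+(1-ε²)cos(s+t)). -/

import Mathlib

open Real MeasureTheory


theorem intCos (k : ℤ) : ∫ t in (0:ℝ)..(2*π), Real.cos (k*t)
    = if k = 0 then 2*π else 0 := by
  rcases eq_or_ne k 0 with h | h
  · simp [h]
  · have hk' : (k:ℝ) ≠ 0 := Int.cast_ne_zero.2 h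
    rw [if_neg h, intervalIntegral.integral_comp_mul_left (fun x => Real.cos x) hk']
    have h2 : Real.sin ((k:ℝ)*(2*π)) = 0 := by
      have := Real.sin_int_mul_pi (2*k)
      push_cast at this
      rw [show (k:ℝ)*(2*π) = 2*(k:ℝ)*π by ring]
      exact this
    simp [h2]

theorem intSin (k : ℤ) : ∫ t in (0:ℝ)..(2*π), Real.sin (k*t) = 0 := by
  rcases eq_or_ne k 0 with h | h
  · simp [h]
  · have hk' : (k:ℝ) ≠ 0 := Int.cast_ne_zero.2 h
    rw [intervalIntegral.integral_comp_mul_left (fun x => Real.sin x) hk']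
    have h2 : Real.cos ((k:ℝ)*(2*π)) = 1 := by
      have := Real.cos_int_mul_two_pi k
      push_cast at this
      rw [show (k:ℝ)*(2*π) = (k:ℝ)*(2*π) from rfl]
      convert this using 2
    simp [h2]
theorem orthoCC (m n : ℕ) : ∫ t in (0:ℝ)..(2*π), Real.cos (m*t) * Real.cos (n*t)
    = if m = n then (if m = 0 then 2*π else π) else 0 := by
  have key : ∀ t : ℝ, Real.cos (m*t) * Real.cos (n*t)
      = (Real.cos ((((m:ℤ)+n):ℤ)*t) + Real.cos ((((m:ℤ)-n):ℤ)*t)) / 2 := by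
    intro t
    push_cast
    rw [show ((m:ℝ)+n)*t = m*t + n*t by ring, show ((m:ℝ)-n)*t = m*t - n*t by ring,
      Real.cos_add, Real.cos_sub]
    ring
  rw [intervalIntegral.integral_congr (fun t _ => key t)]
  have i1 : IntervalIntegrable (fun t => Real.cos ((((m:ℤ)+n):ℤ)*t)) volume 0 (2*π) :=
    (Real.continuous_cos.comp (continuous_const.mul continuous_id)).intervalIntegrable _ _
  have i2 : IntervalIntegrable (fun t => Real.cos ((((m:ℤ)-n):ℤ)*t)) volume 0 (2*π) :=
    (Real.continuous_cos.comp (continuous_const.mul continuous_id)).intervalIntegrable _ _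
  rw [intervalIntegral.integral_div, intervalIntegral.integral_add i1 i2, intCos, intCos]
  rcases eq_or_ne m n with h | h
  · subst h
    rcases eq_or_ne m 0 with h0 | h0
    · subst h0; norm_num
    · have : (m:ℤ) + m ≠ 0 := by positivity
      simp [this, h0]
  · have h1 : (m:ℤ) + n = 0 ↔ (m = 0 ∧ n = 0) := by omega
    have h2 : (m:ℤ) - n ≠ 0 := by omega
    rcases eq_or_ne ((m:ℤ)+n) 0 with ha | ha
    · exact absurd ((h1.1 ha).1.trans (h1.1 ha).2.symm) h
    · simp [ha, h2, h]

theorem orthoCS (m n : ℕ) : ∫ t in (0:ℝ)..(2*π), Real.cos (m*t) * Real.sin (n*t) = 0 := by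
  have key : ∀ t : ℝ, Real.cos (m*t) * Real.sin (n*t)
      = (Real.sin ((((n:ℤ)+m):ℤ)*t) + Real.sin ((((n:ℤ)-m):ℤ)*t)) / 2 := by
    intro t
    push_cast
    rw [show ((n:ℝ)+m)*t = n*t + m*t by ring, show ((n:ℝ)-m)*t = n*t - m*t by ring,
      Real.sin_add, Real.sin_sub]
    ring
  rw [intervalIntegral.integral_congr (fun t _ => key t)]
  have i1 : IntervalIntegrable (fun t => Real.sin ((((n:ℤ)+m):ℤ)*t)) volume 0 (2*π) :=
    (Real.continuous_sin.comp (continuous_const.mul continuous_id)).intervalIntegrable _ _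
  have i2 : IntervalIntegrable (fun t => Real.sin ((((n:ℤ)-m):ℤ)*t)) volume 0 (2*π) :=
    (Real.continuous_sin.comp (continuous_const.mul continuous_id)).intervalIntegrable _ _
  rw [intervalIntegral.integral_div, intervalIntegral.integral_add i1 i2, intSin, intSin]
  norm_num

theorem denPos {r : ℝ} (hr : |r| < 1) (θ : ℝ) : 0 < 1 - 2*r*Real.cos θ + r^2 := by
  obtain ⟨h1, h2⟩ := abs_lt.mp hr
  rcases le_or_gt 0 r with h | h
  · nlinarith [Real.cos_le_one θ, Real.neg_one_le_cos θ, sq_nonneg (1 - r),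
      mul_nonneg h (sub_nonneg.2 (Real.cos_le_one θ))]
  · nlinarith [Real.cos_le_one θ, Real.neg_one_le_cos θ, sq_nonneg (1 + r),
      mul_nonneg (neg_nonneg.2 h.le) (by linarith [Real.neg_one_le_cos θ] : (0:ℝ) ≤ 1 + Real.cos θ)]

theorem poissonSum {r : ℝ} (hr : |r| < 1) (θ : ℝ) :
    HasSum (fun n : ℕ => 2 * r^n * Real.cos (n*θ))
      ((1 - r^2) / (1 - 2*r*Real.cos θ + r^2) + 1) := by
  set z : ℂ := r * Complex.exp (θ * Complex.I) with hz
  have hnorm : ‖z‖ < 1 := by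
    rw [hz, norm_mul, Complex.norm_exp_ofReal_mul_I]
    simpa using hr
  have hgeo : HasSum (fun n : ℕ => z^n) (1 - z)⁻¹ := hasSum_geometric_of_norm_lt_one hnorm
  have hre : HasSum (fun n : ℕ => 2 * (z^n).re) (2 * ((1 - z)⁻¹).re) :=
    (Complex.reCLM.hasSum hgeo).mul_left 2
  have hterm : (fun n : ℕ => 2 * (z^n).re) = fun n : ℕ => 2 * r^n * Real.cos (n*θ) := by
    funext n
    rw [hz, mul_pow, ← Complex.exp_nat_mul,
      show ((n:ℂ) * (θ * Complex.I)) = ((n*θ : ℝ) : ℂ) * Complex.I by push_cast; ring,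
      show ((r:ℂ)^n) = ((r^n : ℝ) : ℂ) by push_cast; ring,
      Complex.re_ofReal_mul, Complex.exp_ofReal_mul_I_re]
    ring
  have hden : 0 < 1 - 2*r*Real.cos θ + r^2 := denPos hr θ
  have hval : 2 * ((1 - z)⁻¹).re = (1 - r^2) / (1 - 2*r*Real.cos θ + r^2) + 1 := by
    rw [Complex.inv_re]
    have h1 : (1 - z).re = 1 - r * Real.cos θ := by
      simp [hz, Complex.exp_ofReal_mul_I_re]
    have h2 : Complex.normSq (1 - z) = 1 - 2*r*Real.cos θ + r^2 := by
      rw [Complex.normSq_apply, h1]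
      have h3 : (1 - z).im = - (r * Real.sin θ) := by
        simp [hz, Complex.exp_ofReal_mul_I_im]
      rw [h3]
      nlinarith [Real.sin_sq_add_cos_sq θ]
    rw [h1, h2]
    field_simp
    ring
  rw [← hterm, ← hval]
  exact hre

theorem poissonInt {r : ℝ} (hr : |r| < 1) (m : ℕ) (s : ℝ) :
    ∫ t in (0:ℝ)..(2*π), Real.cos (m*t) * ((1 - r^2) / (1 - 2*r*Real.cos (s+t) + r^2))
      = 2*π*r^m*Real.cos (m*s) := by
  have hle : (0:ℝ) ≤ 2*π := by positivity
  set F : ℕ → ℝ → ℝ := fun n t => Real.cos (m*t) * (2*r^n*Real.cos (n*(s+t))) with hF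
  have hFc : ∀ n, Continuous (F n) := by
    intro n
    exact (Real.continuous_cos.comp (continuous_const.mul continuous_id)).mul
      (continuous_const.mul (Real.continuous_cos.comp
        (continuous_const.mul (continuous_const.add continuous_id))))
  -- per-term integrals
  have hFint : ∀ n : ℕ, ∫ t in (0:ℝ)..(2*π), F n t
      = (if n = m then (2*r^m*Real.cos (m*s)) * (if m = 0 then 2*π else π) else 0) := by
    intro n
    have key : ∀ t : ℝ, F n t = (2*r^n*Real.cos (n*s)) * (Real.cos (m*t) * Real.cos (n*t))
        - (2*r^n*Real.sin (n*s)) * (Real.cos (m*t) * Real.sin (n*t)) := by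
      intro t
      simp only [hF]
      rw [show (n:ℝ)*(s+t) = n*s + n*t by ring, Real.cos_add]
      ring
    rw [intervalIntegral.integral_congr (fun t _ => key t)]
    have i1 : IntervalIntegrable (fun t => (2*r^n*Real.cos (n*s)) *
        (Real.cos (m*t) * Real.cos (n*t))) volume 0 (2*π) := by
      exact Continuous.intervalIntegrable (by fun_prop) _ _
    have i2 : IntervalIntegrable (fun t => (2*r^n*Real.sin (n*s)) *
        (Real.cos (m*t) * Real.sin (n*t))) volume 0 (2*π) := by
      exact Continuous.intervalIntegrable (by fun_prop) _ _
    rw [intervalIntegral.integral_sub i1 i2, intervalIntegral.integral_const_mul,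
      intervalIntegral.integral_const_mul, orthoCC, orthoCS]
    rcases eq_or_ne n m with h | h
    · subst h; simp
    · simp [h, Ne.symm h]
  -- integrability on Ioc
  have hμ : (volume (Set.Ioc (0:ℝ) (2*π))) = ENNReal.ofReal (2*π) := by
    simp [Real.volume_Ioc]
  have hInt : ∀ n : ℕ, Integrable (F n) (volume.restrict (Set.Ioc (0:ℝ) (2*π))) := by
    intro n
    exact (hFc n).integrableOn_Ioc
  -- summability of norms
  have hSum : Summable fun n : ℕ => ∫ t in Set.Ioc (0:ℝ) (2*π), ‖F n t‖ := by
    apply Summable.of_nonneg_of_le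
      (fun n => integral_nonneg (fun t => norm_nonneg _))
      (fun n => ?_) (((summable_geometric_of_lt_one (abs_nonneg r) hr)).mul_left (2*(2*π)))
    have hb : ∀ t ∈ Set.Ioc (0:ℝ) (2*π), ‖F n t‖ ≤ 2*|r|^n := by
      intro t _
      have h1 := Real.abs_cos_le_one ((m:ℝ)*t)
      have h2 := Real.abs_cos_le_one ((n:ℝ)*(s+t))
      have h3 : ‖F n t‖ = |Real.cos ((m:ℝ)*t)| * (|2| * |r|^n * |Real.cos ((n:ℝ)*(s+t))|) := by
        simp only [hF, Real.norm_eq_abs]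
        rw [abs_mul, abs_mul, abs_mul, abs_pow]
      rw [h3, abs_two]
      have k1 : |Real.cos ((m:ℝ)*t)| * (2 * |r|^n * |Real.cos ((n:ℝ)*(s+t))|)
          ≤ 2 * |r|^n * |Real.cos ((n:ℝ)*(s+t))| :=
        mul_le_of_le_one_left (by positivity) h1
      have k2 : 2 * |r|^n * |Real.cos ((n:ℝ)*(s+t))| ≤ 2 * |r|^n * 1 :=
        mul_le_mul_of_nonneg_left h2 (by positivity)
      linarith
    calc ∫ t in Set.Ioc (0:ℝ) (2*π), ‖F n t‖
        ≤ ∫ _ in Set.Ioc (0:ℝ) (2*π), 2*|r|^n := by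
          apply setIntegral_mono_on ((hInt n).norm) (integrableOn_const ?_)
            measurableSet_Ioc hb
          rw [hμ]; exact ENNReal.ofReal_ne_top
      _ = 2*(2*π)*|r|^n := by
          rw [setIntegral_const, measureReal_def, hμ, ENNReal.toReal_ofReal hle, smul_eq_mul]; ring
  -- swap sum and integral
  have hswap : ∑' n, ∫ t in Set.Ioc (0:ℝ) (2*π), F n t
      = ∫ t in Set.Ioc (0:ℝ) (2*π), ∑' n, F n t :=
    MeasureTheory.integral_tsum_of_summable_integral_norm hInt hSum
  have htsum : ∀ t : ℝ, ∑' n, F n t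
      = Real.cos (m*t) * ((1 - r^2) / (1 - 2*r*Real.cos (s+t) + r^2) + 1) := by
    intro t
    exact ((poissonSum hr (s+t)).mul_left (Real.cos (m*t))).tsum_eq
  -- compute both sides
  have hA : ∫ t in (0:ℝ)..(2*π), Real.cos (m*t) *
      ((1 - r^2) / (1 - 2*r*Real.cos (s+t) + r^2) + 1)
      = (2*r^m*Real.cos (m*s)) * (if m = 0 then 2*π else π) := by
    rw [intervalIntegral.integral_of_le hle]
    rw [show (fun t => Real.cos (m*t) * ((1 - r^2) / (1 - 2*r*Real.cos (s+t) + r^2) + 1))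
      = fun t => ∑' n, F n t from funext fun t => (htsum t).symm]
    rw [← hswap]
    have : ∀ n : ℕ, (∫ t in Set.Ioc (0:ℝ) (2*π), F n t)
        = (if n = m then (2*r^m*Real.cos (m*s)) * (if m = 0 then 2*π else π) else 0) := by
      intro n
      rw [← intervalIntegral.integral_of_le hle]
      exact hFint n
    rw [funext this]
    exact tsum_ite_eq m _
  -- continuity of the main integrand
  have hcont : Continuous fun t => Real.cos (m*t) *
      ((1 - r^2) / (1 - 2*r*Real.cos (s+t) + r^2)) := by
    apply (Real.continuous_cos.comp (continuous_const.mul continuous_id)).mul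
    apply continuous_const.div
    · fun_prop
    · intro t
      exact (denPos hr (s+t)).ne'
  have hcos : IntervalIntegrable (fun t => Real.cos (m*t)) volume 0 (2*π) := by
    exact Continuous.intervalIntegrable (by fun_prop) _ _
  have hsplit : ∫ t in (0:ℝ)..(2*π), Real.cos (m*t) *
      ((1 - r^2) / (1 - 2*r*Real.cos (s+t) + r^2) + 1)
      = (∫ t in (0:ℝ)..(2*π), Real.cos (m*t) *
          ((1 - r^2) / (1 - 2*r*Real.cos (s+t) + r^2)))
        + ∫ t in (0:ℝ)..(2*π), Real.cos (m*t) := by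
    rw [← intervalIntegral.integral_add (hcont.intervalIntegrable _ _) hcos]
    congr 1
    funext t
    ring
  have hcosInt : ∫ t in (0:ℝ)..(2*π), Real.cos (m*t) = if m = 0 then 2*π else 0 := by
    have := intCos (m : ℤ)
    push_cast at this
    rw [this]
    simp
  have := hA
  rw [hsplit, hcosInt] at this
  rcases eq_or_ne m 0 with h0 | h0
  · subst h0
    simp at this ⊢
    linarith
  · simp only [if_neg h0] at this
    rw [show (2*π*r^m*Real.cos (m*s)) = (2*r^m*Real.cos (m*s)) * π by ring]
    linarith

/-- For `m : ℕ`, `μ(s) = 2 cos(ms)/(1+ρ_ε^m)` solves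
`(1/2)μ(s) - ∫₀^{2π} K^L(s,t;ε) μ(t) dt = cos(ms)`. -/
theorem stmt_3 (ε : ℝ) (hε : 0 < ε) (hε1 : ε < 1) (m : ℕ) (s : ℝ) :
    (1 / 2) * (2 * Real.cos (m * s) / (1 + ((ε - 1) / (ε + 1)) ^ m)) -
      ∫ t in (0:ℝ)..(2 * π),
        (-(1 / (2 * π)) * ε / (1 + ε ^ 2 + (1 - ε ^ 2) * Real.cos (s + t))) *
          (2 * Real.cos (m * t) / (1 + ((ε - 1) / (ε + 1)) ^ m))
    = Real.cos (m * s) := by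
  set r : ℝ := (ε - 1) / (ε + 1) with hrdef
  have hε1' : (0:ℝ) < ε + 1 := by linarith
  have hεne : ε + 1 ≠ 0 := hε1'.ne'
  have hrabs : |r| < 1 := by
    rw [hrdef, abs_div, abs_of_pos hε1', abs_of_neg (by linarith : ε - 1 < 0), div_lt_one hε1']
    linarith
  have hq : -1 < r ^ m := by
    rcases m with _ | m
    · norm_num
    · have : |r ^ (m+1)| < 1 := by
        rw [abs_pow]
        exact pow_lt_one₀ (abs_nonneg r) hrabs (Nat.succ_ne_zero m)
      exact (abs_lt.mp this).1
  have hqpos : (0:ℝ) < 1 + r ^ m := by linarith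
  have hπ : (0:ℝ) < π := Real.pi_pos
  have hEq : Set.EqOn
      (fun t => (-(1 / (2 * π)) * ε / (1 + ε ^ 2 + (1 - ε ^ 2) * Real.cos (s + t))) *
        (2 * Real.cos (m * t) / (1 + r ^ m)))
      (fun t => (-(1 / (2 * π * (1 + r ^ m)))) *
        (Real.cos (m * t) * ((1 - r ^ 2) / (1 - 2 * r * Real.cos (s + t) + r ^ 2))))
      (Set.uIcc (0:ℝ) (2*π)) := by
    intro t _
    have hc1 := Real.neg_one_le_cos (s+t)
    have hc2 := Real.cos_le_one (s+t)
    have hD : 0 < 1 + ε ^ 2 + (1 - ε ^ 2) * Real.cos (s + t) := by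
      have h5 : 0 ≤ (1 - ε^2) * (1 + Real.cos (s+t)) :=
        mul_nonneg (by nlinarith) (by linarith)
      nlinarith [mul_pos hε hε]
    have hden : (0:ℝ) < 1 - 2*r*Real.cos (s+t) + r^2 := denPos hrabs (s+t)
    have hND : (1 - r^2) / (1 - 2*r*Real.cos (s+t) + r^2)
        = 2*ε / (1 + ε ^ 2 + (1 - ε ^ 2) * Real.cos (s + t)) := by
      rw [div_eq_div_iff hden.ne' hD.ne', hrdef]
      field_simp
      ring
    simp only [hND]
    field_simp
  rw [intervalIntegral.integral_congr hEq, intervalIntegral.integral_const_mul,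
    poissonInt hrabs m s]
  field_simp
  ring
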